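/- Let k₁ and p be positive integers, k = ⌊p/2⌋, let φ ∈ (0,π], and let Φ ∈ ℝ^{k×k} be a nonnegative diagonal matrix with all diagonal entries ≤ π such that φ is not a diagonal entry of Φ. Then a skew-symmetric (2k₁+p)×(2k₁+p) matrix Ω satisfies exp_m(Ω) = blockdiag(G_{2k₁}(φ·I_{k₁}), G_p(Φ)) if and only if Ω = blockdiag(Ω₁, Ω₂) with Ω₁ ∈ exp_m⁻¹(G_{2k₁}(φ·I_{k₁})) and Ω₂ ∈ exp_m⁻¹(G_p(Φ)). -/

import Mathlib

open Matrix

/-- The matrix exponential of a real square matrix. -/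
noncomputable def mexp {N : Type*} [Fintype N] [DecidableEq N] (M : Matrix N N ℝ) :
    Matrix N N ℝ :=
  NormedSpace.exp M

/-- `G_p(Φ)`: the `p×p` block-diagonal rotation matrix whose j-th 2×2 diagonal block is the
rotation by the j-th diagonal entry of the diagonal matrix `Φ` (represented by the vector of
its diagonal entries); if `p` is odd, an extra diagonal entry `1` is appended. -/
noncomputable def Gmat (p : ℕ) (Φ : Fin (p / 2) → ℝ) : Matrix (Fin p) (Fin p) ℝ :=
  Matrix.of fun i j =>
    if h : i.val / 2 = j.val / 2 ∧ i.val / 2 < p / 2 then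
      if i.val % 2 = 0 then
        if j.val % 2 = 0 then Real.cos (Φ ⟨i.val / 2, h.2⟩) else -Real.sin (Φ ⟨i.val / 2, h.2⟩)
      else
        if j.val % 2 = 0 then Real.sin (Φ ⟨i.val / 2, h.2⟩) else Real.cos (Φ ⟨i.val / 2, h.2⟩)
    else if i = j then 1 else 0

/-- `Ω_p(Φ, K)`: the `p×p` block-diagonal skew-symmetric matrix whose j-th 2×2 diagonal block is
`(Φ_jj + 2π K_jj) · J₂` where `J₂ = [[0,-1],[1,0]]`; if `p` is odd, an extra diagonal entry `0`
is appended. -/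
noncomputable def Omat (p : ℕ) (Φ : Fin (p / 2) → ℝ) (K : Fin (p / 2) → ℤ) :
    Matrix (Fin p) (Fin p) ℝ :=
  Matrix.of fun i j =>
    if h : i.val / 2 = j.val / 2 ∧ i.val / 2 < p / 2 then
      if i.val % 2 = 0 ∧ j.val % 2 = 1 then
        -(Φ ⟨i.val / 2, h.2⟩ + 2 * Real.pi * (K ⟨i.val / 2, h.2⟩ : ℝ))
      else if i.val % 2 = 1 ∧ j.val % 2 = 0 then
        Φ ⟨i.val / 2, h.2⟩ + 2 * Real.pi * (K ⟨i.val / 2, h.2⟩ : ℝ)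
      else 0
    else 0

section helpers
variable {n m : Type*} [Fintype n] [DecidableEq n] [Fintype m] [DecidableEq m]

noncomputable def fbAlgHom :
    (Matrix n n ℝ × Matrix m m ℝ) →ₐ[ℝ] Matrix (n ⊕ m) (n ⊕ m) ℝ where
  toFun x := Matrix.fromBlocks x.1 0 0 x.2
  map_one' := Matrix.fromBlocks_one
  map_mul' x y := by
    simp [Matrix.fromBlocks_multiply]
  map_zero' := by simp [Matrix.fromBlocks]; ext (i|i) (j|j) <;> simp
  map_add' x y := by
    have := Matrix.fromBlocks_add x.1 (0 : Matrix n m ℝ) (0 : Matrix m n ℝ) x.2 y.1 0 0 y.2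
    simp at this
    simp [this]
  commutes' r := by
    ext (i|i) (j|j) <;>
      simp [Matrix.algebraMap_matrix_apply, Prod.algebraMap_apply, Matrix.fromBlocks,
        Matrix.one_apply]

lemma mexp_fromBlocks (A : Matrix n n ℝ) (B : Matrix m m ℝ) :
    mexp (Matrix.fromBlocks A 0 0 B) = Matrix.fromBlocks (mexp A) 0 0 (mexp B) := by
  letI : NormedRing (Matrix n n ℝ) := Matrix.linftyOpNormedRing
  letI : NormedAlgebra ℝ (Matrix n n ℝ) := Matrix.linftyOpNormedAlgebra
  letI : NormedRing (Matrix m m ℝ) := Matrix.linftyOpNormedRing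
  letI : NormedAlgebra ℝ (Matrix m m ℝ) := Matrix.linftyOpNormedAlgebra
  letI : NormedRing (Matrix (n ⊕ m) (n ⊕ m) ℝ) := Matrix.linftyOpNormedRing
  letI : NormedAlgebra ℝ (Matrix (n ⊕ m) (n ⊕ m) ℝ) := Matrix.linftyOpNormedAlgebra
  letI : NormedAlgebra ℚ (Matrix n n ℝ) :=
    { (inferInstance : Algebra ℚ (Matrix n n ℝ)) with
      norm_smul_le := fun q x => by
        rw [← algebraMap_smul ℝ q x]
        exact (norm_smul_le _ _).trans (by simp) }
  letI : NormedAlgebra ℚ (Matrix m m ℝ) :=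
    { (inferInstance : Algebra ℚ (Matrix m m ℝ)) with
      norm_smul_le := fun q x => by
        rw [← algebraMap_smul ℝ q x]
        exact (norm_smul_le _ _).trans (by simp) }
  letI : NormedAlgebra ℚ (Matrix (n ⊕ m) (n ⊕ m) ℝ) :=
    { (inferInstance : Algebra ℚ (Matrix (n ⊕ m) (n ⊕ m) ℝ)) with
      norm_smul_le := fun q x => by
        rw [← algebraMap_smul ℝ q x]
        exact (norm_smul_le _ _).trans (by simp) }
  have hf : Continuous (fbAlgHom (n := n) (m := m)) :=
    (fbAlgHom (n := n) (m := m)).toLinearMap.continuous_of_finiteDimensional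
  have h1 := NormedSpace.map_exp (fbAlgHom (n := n) (m := m)) hf (A, B)
  have h2 : NormedSpace.exp ((A, B) : Matrix n n ℝ × Matrix m m ℝ)
      = (NormedSpace.exp A, NormedSpace.exp B) := by
    ext1
    · exact Prod.fst_exp _
    · exact Prod.snd_exp _
  erw [h2] at h1
  simp only [fbAlgHom, mexp] at h1 ⊢
  exact h1.symm

end helpers

lemma Gmat_add_transpose (p : ℕ) (Φ : Fin (p / 2) → ℝ) :
    Gmat p Φ + (Gmat p Φ)ᵀ = Matrix.diagonal (fun j : Fin p =>
      if h : j.val / 2 < p / 2 then 2 * Real.cos (Φ ⟨j.val / 2, h⟩) else 2) := by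
  ext i j
  simp only [Matrix.add_apply, Matrix.transpose_apply, Gmat, Matrix.of_apply,
    Matrix.diagonal_apply]
  by_cases hij : i = j
  · subst hij
    rw [if_pos rfl]
    by_cases h : i.val / 2 < p / 2
    · rw [dif_pos (⟨rfl, h⟩ : i.val / 2 = i.val / 2 ∧ i.val / 2 < p / 2), dif_pos h]
      rcases Nat.mod_two_eq_zero_or_one i.val with h2 | h2 <;> rw [h2] <;> norm_num <;> ring
    · rw [dif_neg (fun hh : i.val / 2 = i.val / 2 ∧ i.val / 2 < p / 2 => h hh.2), dif_neg h,
        if_pos rfl]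
      norm_num
  · rw [if_neg hij]
    have hne : i.val ≠ j.val := fun hval => hij (Fin.ext hval)
    by_cases h : i.val / 2 = j.val / 2 ∧ i.val / 2 < p / 2
    · have h' : j.val / 2 = i.val / 2 ∧ j.val / 2 < p / 2 := ⟨h.1.symm, h.1 ▸ h.2⟩
      rw [dif_pos h, dif_pos h']
      have e : (⟨j.val / 2, h'.2⟩ : Fin (p / 2)) = ⟨i.val / 2, h.2⟩ := by
        ext; exact h.1.symm
      rw [e]
      rcases Nat.mod_two_eq_zero_or_one i.val with h2 | h2 <;>
        rcases Nat.mod_two_eq_zero_or_one j.val with h3 | h3 <;>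
        first
        | (exfalso; omega)
        | (rw [h2, h3]; simp [hij])
    · have h' : ¬(j.val / 2 = i.val / 2 ∧ j.val / 2 < p / 2) := fun hh =>
        h ⟨hh.1.symm, hh.1 ▸ hh.2⟩
      rw [dif_neg h, dif_neg h', if_neg hij, if_neg (Ne.symm hij)]
      ring


/-- The matrix exponential inverse of the block-diagonal matrix
`blockdiag(G_{2k₁}(φ·I_{k₁}), G_p(Φ))`, where `φ ∈ (0,π]` is not a diagonal entry of the
nonnegative diagonal matrix `Φ` with entries `≤ π`: a skew-symmetric matrix `Ω` satisfies
`exp_m(Ω) = blockdiag(G_{2k₁}(φ·I_{k₁}), G_p(Φ))` iff `Ω = blockdiag(Ω₁, Ω₂)` with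
`Ω₁ ∈ exp_m⁻¹(G_{2k₁}(φ·I_{k₁}))` and `Ω₂ ∈ exp_m⁻¹(G_p(Φ))`. -/
theorem expm_inv_blockdiag (k₁ p : ℕ) (hk₁ : 0 < k₁) (hp : 0 < p)
    (φ : ℝ) (hφ0 : 0 < φ) (hφπ : φ ≤ Real.pi)
    (Φ : Fin (p / 2) → ℝ) (hΦ0 : ∀ i, 0 ≤ Φ i) (hΦπ : ∀ i, Φ i ≤ Real.pi)
    (hφΦ : ∀ i, Φ i ≠ φ)
    (Ω : Matrix (Fin (2 * k₁) ⊕ Fin p) (Fin (2 * k₁) ⊕ Fin p) ℝ) (hΩ : Ωᵀ = -Ω) :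
    mexp Ω = Matrix.fromBlocks (Gmat (2 * k₁) (fun _ => φ)) 0 0 (Gmat p Φ) ↔
      ∃ (Ω₁ : Matrix (Fin (2 * k₁)) (Fin (2 * k₁)) ℝ) (Ω₂ : Matrix (Fin p) (Fin p) ℝ),
        Ω₁ᵀ = -Ω₁ ∧ Ω₂ᵀ = -Ω₂ ∧
        mexp Ω₁ = Gmat (2 * k₁) (fun _ => φ) ∧ mexp Ω₂ = Gmat p Φ ∧
        Ω = Matrix.fromBlocks Ω₁ 0 0 Ω₂ := by
  constructor
  · intro H
    set G₁ := Gmat (2 * k₁) (fun _ => φ) with hG₁def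
    set G₂ := Gmat p Φ with hG₂def
    set G : Matrix (Fin (2 * k₁) ⊕ Fin p) (Fin (2 * k₁) ⊕ Fin p) ℝ :=
      Matrix.fromBlocks G₁ 0 0 G₂ with hGdef
    set d₂ : Fin p → ℝ := fun j =>
      if h : j.val / 2 < p / 2 then 2 * Real.cos (Φ ⟨j.val / 2, h⟩) else 2 with hd₂def
    -- d₂ j ≠ 2 cos φ
    have hφmem : φ ∈ Set.Icc (0 : ℝ) Real.pi := ⟨le_of_lt hφ0, hφπ⟩
    have hd₂ : ∀ j : Fin p, d₂ j ≠ 2 * Real.cos φ := by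
      intro j
      rw [hd₂def]
      simp only []
      by_cases h : j.val / 2 < p / 2
      · rw [dif_pos h]
        intro he
        have : Real.cos (Φ ⟨j.val / 2, h⟩) = Real.cos φ := by linarith
        exact hφΦ _ (Real.injOn_cos ⟨hΦ0 _, hΦπ _⟩ hφmem this)
      · rw [dif_neg h]
        intro he
        have hc1 : Real.cos φ = 1 := by linarith
        have : φ = 0 := by
          have := Real.injOn_cos hφmem ⟨le_refl 0, Real.pi_pos.le⟩
            (by rw [hc1, Real.cos_zero])
          exact this
        exact absurd this (ne_of_gt hφ0)
    -- Ω commutes with G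
    have hcG : G * Ω = Ω * G := by
      rw [← H]
      exact (Commute.refl Ω).exp_left
    have hcGT : Gᵀ * Ω = Ω * Gᵀ := by
      have h1 := congrArg Matrix.transpose hcG
      rw [Matrix.transpose_mul, Matrix.transpose_mul, hΩ, Matrix.neg_mul, Matrix.mul_neg,
        neg_inj] at h1
      exact h1.symm
    have hcS : (G + Gᵀ) * Ω = Ω * (G + Gᵀ) := by
      rw [add_mul, mul_add, hcG, hcGT]
    -- the form of G + Gᵀ
    have hSform : G + Gᵀ = Matrix.fromBlocks
        (Matrix.diagonal (fun _ : Fin (2 * k₁) => 2 * Real.cos φ)) 0 0 (Matrix.diagonal d₂) := by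
      rw [hGdef, Matrix.fromBlocks_transpose]
      have hz : (0 : Matrix (Fin (2 * k₁)) (Fin p) ℝ)ᵀ = 0 := Matrix.transpose_zero
      have hz' : (0 : Matrix (Fin p) (Fin (2 * k₁)) ℝ)ᵀ = 0 := Matrix.transpose_zero
      rw [hz, hz']
      rw [show Matrix.fromBlocks G₁ 0 0 G₂ + Matrix.fromBlocks G₁ᵀ 0 0 G₂ᵀ
          = Matrix.fromBlocks (G₁ + G₁ᵀ) (0 + 0) (0 + 0) (G₂ + G₂ᵀ) from
        (Matrix.fromBlocks_add _ _ _ _ _ _ _ _)]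
      rw [add_zero]
      rw [hG₁def, hG₂def, Gmat_add_transpose, Gmat_add_transpose]
      have hfun1 : (fun j : Fin (2 * k₁) => if h : (j : ℕ) / 2 < 2 * k₁ / 2 then
          2 * Real.cos ((fun _ : Fin (2 * k₁ / 2) => φ) ⟨(j : ℕ) / 2, h⟩) else 2)
          = fun _ : Fin (2 * k₁) => 2 * Real.cos φ := by
        funext j
        have hj : (j : ℕ) / 2 < 2 * k₁ / 2 := by have := j.isLt; omega
        rw [dif_pos hj]
      rw [hfun1]
      rw [add_zero]
    rw [hSform] at hcS
    -- block decomposition of Ω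
    set W := Ω.toBlocks₁₁ with hW
    set X := Ω.toBlocks₁₂ with hX
    set Y := Ω.toBlocks₂₁ with hY
    set Z := Ω.toBlocks₂₂ with hZ
    have hΩb : Ω = Matrix.fromBlocks W X Y Z := (Matrix.fromBlocks_toBlocks Ω).symm
    rw [hΩb, Matrix.fromBlocks_multiply, Matrix.fromBlocks_multiply] at hcS
    have h12 := congrArg Matrix.toBlocks₁₂ hcS
    simp only [Matrix.toBlocks_fromBlocks₁₂, Matrix.zero_mul, Matrix.mul_zero, add_zero,
      zero_add] at h12
    -- h12 : diagonal c * X = X * diagonal d₂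
    have hX0 : X = 0 := by
      ext i j
      have he := congrFun (congrFun h12 i) j
      rw [Matrix.diagonal_mul, Matrix.mul_diagonal] at he
      by_contra hne
      have hne' : X i j ≠ 0 := hne
      have h2 : (2 * Real.cos φ) * X i j = d₂ j * X i j := by rw [he, mul_comm]
      exact hd₂ j (mul_right_cancel₀ hne' h2).symm
    have hY0 : Y = 0 := by
      ext j i
      have : Ω (Sum.inr j) (Sum.inl i) = -Ω (Sum.inl i) (Sum.inr j) := by
        have := congrFun (congrFun hΩ (Sum.inl i)) (Sum.inr j)
        simpa [Matrix.transpose_apply] using this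
      have hXe : Ω (Sum.inl i) (Sum.inr j) = X i j := rfl
      have hYe : Ω (Sum.inr j) (Sum.inl i) = Y j i := rfl
      rw [hXe, hX0] at this
      simpa [hYe] using this
    -- skewness of blocks
    have hWskew : Wᵀ = -W := by
      ext i j
      have := congrFun (congrFun hΩ (Sum.inl i)) (Sum.inl j)
      simpa [Matrix.transpose_apply, hW, Matrix.toBlocks₁₁] using this
    have hZskew : Zᵀ = -Z := by
      ext i j
      have := congrFun (congrFun hΩ (Sum.inr i)) (Sum.inr j)
      simpa [Matrix.transpose_apply, hZ, Matrix.toBlocks₂₂] using this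
    have hΩfin : Ω = Matrix.fromBlocks W 0 0 Z := by rw [hΩb, hX0, hY0]
    have hexp : Matrix.fromBlocks (mexp W) 0 0 (mexp Z) = Matrix.fromBlocks G₁ 0 0 G₂ := by
      rw [← mexp_fromBlocks, ← hΩfin, H, hGdef]
    have hexpW : mexp W = G₁ := by
      have := congrArg Matrix.toBlocks₁₁ hexp
      simpa [Matrix.toBlocks_fromBlocks₁₁] using this
    have hexpZ : mexp Z = G₂ := by
      have := congrArg Matrix.toBlocks₂₂ hexp
      simpa [Matrix.toBlocks_fromBlocks₂₂] using this
    exact ⟨W, Z, hWskew, hZskew, hexpW, hexpZ, hΩfin⟩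
  · rintro ⟨Ω₁, Ω₂, -, -, h1, h2, rfl⟩
    rw [mexp_fromBlocks, h1, h2]
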